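/- If c > λ·∫_ℝ x L(dx) (the net profit condition), then lim_{u→∞} ν(u) = 0; equivalently, the non-ruin probability 1 − ν(u) tends to 1 as the initial capital u tends to infinity. -/

import Mathlib

open MeasureTheory ProbabilityTheory Real Set

lemma exponentialPDFReal_eq_ite (r x : ℝ) :
    exponentialPDFReal r x = if 0 ≤ x then r * Real.exp (-(r * x)) else 0 := by
  rw [exponentialPDFReal, gammaPDFReal]
  split_ifs with h
  · simp [Real.rpow_one, Real.Gamma_one, Real.rpow_zero]
  · rfl

lemma aux_integrableOn_exp (r : ℝ) (hr : 0 < r) :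
    MeasureTheory.IntegrableOn (fun x : ℝ => x * Real.exp (-(r * x))) (Set.Ioi 0) := by
  have h := integrableOn_rpow_mul_exp_neg_mul_rpow (p := 1) (s := 1) (b := r)
    (by norm_num) (by norm_num) hr
  simpa [Real.rpow_one, neg_mul] using h

lemma aux_Gamma_two : Real.Gamma 2 = 1 := by
  rw [show (2 : ℝ) = 1 + 1 by norm_num, Real.Gamma_add_one one_ne_zero, Real.Gamma_one, mul_one]

lemma aux_expMeasure_eq (r : ℝ) :
    expMeasure r
      = (volume : Measure ℝ).withDensity
          (fun x => ((exponentialPDFReal r x).toNNReal : ENNReal)) := rfl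

lemma aux_smul_eq_indicator (r : ℝ) (hr : 0 < r) :
    (fun x : ℝ => (exponentialPDFReal r x).toNNReal • x)
      = Set.indicator (Set.Ioi (0:ℝ)) (fun x => r * (x * Real.exp (-(r * x)))) := by
  funext x
  have hnn : 0 ≤ exponentialPDFReal r x := by
    rw [exponentialPDFReal_eq_ite]; split_ifs with h
    · positivity
    · exact le_refl 0
  rw [NNReal.smul_def, Real.coe_toNNReal _ hnn, exponentialPDFReal_eq_ite]
  rcases lt_trichotomy x 0 with hx | hx | hx
  · rw [if_neg (not_le.mpr hx), Set.indicator_of_notMem (by simpa using hx.le)]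
    simp
  · subst hx
    simp
  · rw [if_pos hx.le, Set.indicator_of_mem (by simpa using hx), smul_eq_mul]
    ring

lemma aux_exp_integrable (r : ℝ) (hr : 0 < r) :
    Integrable (fun x : ℝ => x) (expMeasure r) := by
  rw [aux_expMeasure_eq]
  rw [integrable_withDensity_iff_integrable_smul
    ((measurable_exponentialPDFReal r).real_toNNReal)]
  rw [aux_smul_eq_indicator r hr]
  rw [integrable_indicator_iff measurableSet_Ioi]
  exact (aux_integrableOn_exp r hr).const_mul r

lemma aux_exp_mean (r : ℝ) (hr : 0 < r) :
    ∫ x, x ∂(expMeasure r) = 1 / r := by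
  rw [aux_expMeasure_eq,
    integral_withDensity_eq_integral_smul ((measurable_exponentialPDFReal r).real_toNNReal)]
  rw [aux_smul_eq_indicator r hr, MeasureTheory.integral_indicator measurableSet_Ioi]
  rw [MeasureTheory.integral_const_mul]
  have h2 := integral_rpow_mul_exp_neg_mul_Ioi (a := 2) (r := r) (by norm_num) hr
  have h3 : ∫ t : ℝ in Set.Ioi 0, t ^ ((2:ℝ) - 1) * Real.exp (-(r * t))
      = ∫ t : ℝ in Set.Ioi 0, t * Real.exp (-(r * t)) := by
    refine setIntegral_congr_fun measurableSet_Ioi (fun t _ => ?_)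
    norm_num
  rw [h3] at h2
  rw [show (fun x : ℝ => x * Real.exp (-(r * x))) = fun t : ℝ => t * Real.exp (-(r * t)) from rfl,
    h2, aux_Gamma_two]
  rw [show ((1:ℝ)/r) ^ (2:ℝ) = (1/r)^(2:ℕ) by
    rw [← Real.rpow_natCast (1/r) 2]; norm_num]
  field_simp

/-- In the Cramér–Lundberg model with claim law `L`, claim arrival
intensity `lam` and premium rate `c`, under the net profit condition
`c > lam * ∫ x ∂L`, the ruin probability tends to `0` as the initial capital tends
to infinity (equivalently, the non-ruin probability tends to `1`). -/
theorem ruin_tendsto_zero_of_net_profit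
    {Ω : Type*} [MeasurableSpace Ω] (P : Measure Ω) [IsProbabilityMeasure P]
    (lam : ℝ) (hlam : 0 < lam) (c : ℝ) (hc : 0 ≤ c)
    (L : Measure ℝ) [IsProbabilityMeasure L]
    (hL0 : L {0} = 0)
    (hLint : Integrable (fun x => x) L)
    (hLpos : 0 < ∫ x in Ioi (0 : ℝ), x ∂L)
    (hLneg : ∫ x in Iio (0 : ℝ), x ∂L < 0)
    (X W : ℕ → Ω → ℝ)
    (hXmeas : ∀ i, Measurable (X i)) (hWmeas : ∀ i, Measurable (W i))
    (hXlaw : ∀ i, Measure.map (X i) P = L)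
    (hWlaw : ∀ i, Measure.map (W i) P = expMeasure lam)
    (hindep : iIndepFun (Sum.elim X W) P)
    (S : ℕ → Ω → ℝ)
    (hS : ∀ n ω, S n ω = ∑ i ∈ Finset.range n, (X i ω - c * W i ω))
    (ν : ℝ → ℝ)
    (hν_pos : ∀ u : ℝ, 0 ≤ u → ν u = (P {ω | ∃ n : ℕ, 1 ≤ n ∧ S n ω > u}).toReal)
    (hν_neg : ∀ u : ℝ, u < 0 → ν u = 1)
    (hnet : c > lam * ∫ x, x ∂L) :
    Filter.Tendsto ν Filter.atTop (nhds 0) := by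
  classical
  haveI : IsProbabilityMeasure (expMeasure lam) := isProbabilityMeasure_expMeasure hlam
  set Y : ℕ → Ω → ℝ := fun i ω => X i ω - c * W i ω with hY
  -- measurability of S
  have hSmeas : ∀ n, Measurable (S n) := by
    intro n
    have : S n = fun ω => ∑ i ∈ Finset.range n, (X i ω - c * W i ω) := funext (hS n)
    rw [this]
    exact Finset.measurable_sum _ (fun i _ => (hXmeas i).sub ((hWmeas i).const_mul c))
  -- integrability of X 0, W 0
  have hX0 : Integrable (X 0) P := by
    have h1 : Integrable (fun x : ℝ => x) (P.map (X 0)) := by rw [hXlaw 0]; exact hLint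
    exact (integrable_map_measure measurable_id.aestronglyMeasurable
      (hXmeas 0).aemeasurable).mp h1
  have hW0 : Integrable (W 0) P := by
    have h1 : Integrable (fun x : ℝ => x) (P.map (W 0)) := by
      rw [hWlaw 0]; exact aux_exp_integrable lam hlam
    exact (integrable_map_measure measurable_id.aestronglyMeasurable
      (hWmeas 0).aemeasurable).mp h1
  have hYint : Integrable (Y 0) P := hX0.sub (hW0.const_mul c)
  -- expectations
  have hmX : ∫ ω, X 0 ω ∂P = ∫ x, x ∂L := by
    have h := integral_map (μ := P) (φ := X 0) (f := fun x : ℝ => x) (hXmeas 0).aemeasurable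
      measurable_id.aestronglyMeasurable
    rw [hXlaw 0] at h
    rw [← h]
  have hmW : ∫ ω, W 0 ω ∂P = 1 / lam := by
    have h := integral_map (μ := P) (φ := W 0) (f := fun x : ℝ => x) (hWmeas 0).aemeasurable
      measurable_id.aestronglyMeasurable
    rw [hWlaw 0] at h
    rw [← h, aux_exp_mean lam hlam]
  have hmY : ∫ ω, Y 0 ω ∂P = (∫ x, x ∂L) - c / lam := by
    rw [hY]
    rw [integral_sub hX0 (hW0.const_mul c), MeasureTheory.integral_const_mul, hmX, hmW]
    ring
  have hmneg : (∫ x, x ∂L) - c / lam < 0 := by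
    have : (∫ x, x ∂L) < c / lam := by
      rw [lt_div_iff₀ hlam]; linarith [hnet]
    linarith
  -- pairwise independence of Y
  have hYindep : Pairwise (Function.onFun (fun f g => IndepFun f g P) Y) := by
    intro i j hij
    set φ : (j : ℕ ⊕ ℕ) → ℝ → ℝ := Sum.elim (fun _ => id) (fun _ x => c * x) with hφdef
    have hφ : ∀ j, Measurable (φ j) := by
      rintro (k | k)
      · exact measurable_id
      · exact measurable_id.const_mul c
    have hg : iIndepFun
        (fun j => φ j ∘ Sum.elim X W j) P := hindep.comp φ hφ
    have hgmeas : ∀ j : ℕ ⊕ ℕ, Measurable ((fun j => φ j ∘ Sum.elim X W j) j) := by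
      rintro (k | k)
      · exact (hφ _).comp (hXmeas k)
      · exact (hφ _).comp (hWmeas k)
    have h := hg.indepFun_sub_sub hgmeas (Sum.inl i) (Sum.inr i) (Sum.inl j) (Sum.inr j)
      (by simp [hij]) (by simp) (by simp) (by simp [hij])
    exact h
  -- identical distribution of Y
  have hXWindep : ∀ i, IndepFun (X i) (W i) P := by
    intro i
    have h := hindep.indepFun (i := Sum.inl i) (j := Sum.inr i) (by simp)
    exact h
  have hmap : ∀ i, P.map (fun ω => (X i ω, W i ω)) = L.prod (expMeasure lam) := by
    intro i
    rw [(indepFun_iff_map_prod_eq_prod_map_map (hXmeas i).aemeasurable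
      (hWmeas i).aemeasurable).mp (hXWindep i), hXlaw i, hWlaw i]
  have hYident : ∀ i, IdentDistrib (Y i) (Y 0) P P := by
    intro i
    have hpair : IdentDistrib (fun ω => (X i ω, W i ω)) (fun ω => (X 0 ω, W 0 ω)) P P :=
      ⟨((hXmeas i).prodMk (hWmeas i)).aemeasurable,
       ((hXmeas 0).prodMk (hWmeas 0)).aemeasurable, by rw [hmap i, hmap 0]⟩
    exact hpair.comp (measurable_fst.sub (measurable_snd.const_mul c))
  -- strong law of large numbers
  have hslln := strong_law_ae_real Y hYint hYindep hYident
  -- a.e. boundedness of the random walk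
  have hae : ∀ᵐ ω ∂P, ∃ M : ℝ, ∀ n, S n ω ≤ M := by
    filter_upwards [hslln] with ω hω
    have hne : ∀ᶠ n in Filter.atTop,
        (∑ i ∈ Finset.range n, Y i ω) / (n : ℝ) < 0 := by
      apply hω.eventually_lt_const
      rw [hmY]; exact hmneg
    obtain ⟨N, hN⟩ := hne.exists_forall_of_atTop
    refine ⟨∑ k ∈ Finset.range N, |S k ω|, fun n => ?_⟩
    rcases lt_or_ge n N with h | h
    · calc S n ω ≤ |S n ω| := le_abs_self _
        _ ≤ ∑ k ∈ Finset.range N, |S k ω| :=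
          Finset.single_le_sum (f := fun k => |S k ω|) (fun k _ => abs_nonneg _) (Finset.mem_range.mpr h)
    · have h0 : (∑ i ∈ Finset.range n, Y i ω) < 0 := by
        rcases div_neg_iff.mp (hN n h) with ⟨_, h2⟩ | ⟨h1, _⟩
        · exact absurd h2 (not_lt.mpr (Nat.cast_nonneg n))
        · exact h1
      have hSn : S n ω < 0 := by rw [hS n ω]; exact h0
      have : (0:ℝ) ≤ ∑ k ∈ Finset.range N, |S k ω| :=
        Finset.sum_nonneg (fun k _ => abs_nonneg _)
      linarith
  -- the ruin events
  set A : ℕ → Set Ω := fun k => {ω | ∃ n : ℕ, 1 ≤ n ∧ S n ω > (k : ℝ)} with hA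
  have hAmeas : ∀ k, MeasurableSet (A k) := by
    intro k
    have : A k = ⋃ n : ℕ, ⋃ (_ : 1 ≤ n), {ω | (k : ℝ) < S n ω} := by
      ext ω; simp [hA]
    rw [this]
    exact MeasurableSet.iUnion fun n => MeasurableSet.iUnion fun _ =>
      measurableSet_lt measurable_const (hSmeas n)
  have hAanti : Antitone A := by
    intro k l hkl ω hω
    obtain ⟨n, hn1, hn2⟩ := hω
    exact ⟨n, hn1, lt_of_le_of_lt (by exact_mod_cast hkl) hn2⟩
  have hInter : P (⋂ k, A k) = 0 := by
    have hbad : P {ω | ¬ ∃ M : ℝ, ∀ n, S n ω ≤ M} = 0 := ae_iff.mp hae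
    refine measure_mono_null ?_ hbad
    intro ω hω
    rintro ⟨M, hM⟩
    obtain ⟨n, _, hn2⟩ := mem_iInter.mp hω ⌈M⌉₊
    exact absurd (hM n) (not_le.mpr (lt_of_le_of_lt (Nat.le_ceil M) hn2))
  have htend : Filter.Tendsto (fun k => P (A k)) Filter.atTop (nhds 0) := by
    have h := tendsto_measure_iInter_atTop (μ := P)
      (fun k => (hAmeas k).nullMeasurableSet) hAanti ⟨0, measure_ne_top P _⟩
    rw [hInter] at h
    exact h
  have htendR : Filter.Tendsto (fun k => (P (A k)).toReal) Filter.atTop (nhds 0) := by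
    have h := (ENNReal.tendsto_toReal (by simp : (0:ENNReal) ≠ ⊤)).comp htend
    simpa [Function.comp_def] using h
  -- conclude
  rw [Metric.tendsto_atTop]
  intro ε hε
  obtain ⟨k, hk⟩ := (htendR.eventually (gt_mem_nhds hε)).exists
  refine ⟨(k : ℝ), fun u hu => ?_⟩
  have hu0 : (0:ℝ) ≤ u := le_trans (Nat.cast_nonneg k) hu
  have hsub : {ω | ∃ n : ℕ, 1 ≤ n ∧ S n ω > u} ⊆ A k := by
    rintro ω ⟨n, hn1, hn2⟩
    exact ⟨n, hn1, lt_of_le_of_lt hu hn2⟩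
  have hle : ν u ≤ (P (A k)).toReal := by
    rw [hν_pos u hu0]
    exact ENNReal.toReal_mono (measure_ne_top P _) (measure_mono hsub)
  have hge : 0 ≤ ν u := by
    rw [hν_pos u hu0]; exact ENNReal.toReal_nonneg
  rw [Real.dist_0_eq_abs, abs_of_nonneg hge]
  exact lt_of_le_of_lt hle hk
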